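/- The class of affine signatures is closed under summing out a variable: if f(x₁,…,x_n) is affine, then g(x₁,…,x_{j−1},x_{j+1},…,x_n) = Σ_{x_j∈{0,1}} f(x₁,…,x_n) is affine. -/

import Mathlib

open Matrix

/-- The extended vector (x₁,…,x_k,1) over 𝔽₂. -/
def ext {k : ℕ} (x : Fin k → ZMod 2) : Fin (k + 1) → ZMod 2 := Fin.snoc x 1

/-- A function f : {0,1}^k → ℂ is affine if it has the form
λ · χ_{Ax=0} · i^{Σⱼ⟨αⱼ,x⟩} on the extended vector x = (x₁,…,x_k,1). -/
def IsAffine (k : ℕ) (f : (Fin k → ZMod 2) → ℂ) : Prop :=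
  ∃ (lam : ℂ) (m t : ℕ) (A : Matrix (Fin m) (Fin (k + 1)) (ZMod 2))
    (α : Fin t → Fin (k + 1) → ZMod 2),
    ∀ x, f x = lam * (if A.mulVec (ext x) = 0 then 1 else 0) *
      Complex.I ^ ((∑ j, (∑ i, α j i * ext x i).val) % 4)

/-- Assemble the row index (x₁,…,x_n) and column index (x₂ₙ,…,x_{n+1})
into the full argument (x₁,…,x₂ₙ). -/
def assemble {n : ℕ} (x y : Fin n → ZMod 2) : Fin (2 * n) → ZMod 2 :=
  fun i => if h : (i : ℕ) < n then x ⟨i, h⟩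
    else y ⟨2 * n - 1 - i, by have := i.isLt; omega⟩

/-- The signature matrix of an arity-2n signature. -/
def sigMatrix (n : ℕ) (f : (Fin (2 * n) → ZMod 2) → ℂ) :
    Matrix (Fin n → ZMod 2) (Fin n → ZMod 2) ℂ :=
  Matrix.of fun x y => f (assemble x y)

/-! ### Auxiliary lemmas -/

lemma I_pow_mod4 (a : ℕ) : Complex.I ^ (a % 4) = Complex.I ^ a := by
  conv_rhs => rw [← Nat.div_add_mod a 4]
  rw [pow_add, pow_mul, Complex.I_pow_four, one_pow, one_mul]

lemma neg_one_pow_congr' {M N : ℕ} (h : M % 2 = N % 2) : (-1 : ℂ) ^ M = (-1 : ℂ) ^ N := by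
  rw [← Nat.div_add_mod M 2, ← Nat.div_add_mod N 2, pow_add, pow_add, pow_mul, pow_mul]
  norm_num [h]

/-- A variant of `IsAffine` without the `% 4` in the exponent. -/
def IsAffine' (k : ℕ) (f : (Fin k → ZMod 2) → ℂ) : Prop :=
  ∃ (lam : ℂ) (m t : ℕ) (A : Matrix (Fin m) (Fin (k + 1)) (ZMod 2))
    (α : Fin t → Fin (k + 1) → ZMod 2),
    ∀ x, f x = lam * (if A.mulVec (ext x) = 0 then 1 else 0) *
      Complex.I ^ (∑ j, (∑ i, α j i * ext x i).val)

lemma isAffine_iff {k : ℕ} (f : (Fin k → ZMod 2) → ℂ) :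
    IsAffine k f ↔ IsAffine' k f := by
  constructor <;> rintro ⟨lam, m, t, A, α, h⟩ <;> refine ⟨lam, m, t, A, α, fun x => ?_⟩
  · rw [h x, I_pow_mod4]
  · rw [h x, I_pow_mod4]

lemma succAbove_last' {n : ℕ} (j : Fin (n + 1)) :
    (j.castSucc).succAbove (Fin.last n) = Fin.last (n + 1) := by
  rw [Fin.succAbove_of_le_castSucc, Fin.succ_last]
  simp [Fin.le_def]; omega

lemma ext_insertNth {n : ℕ} (j : Fin (n + 1)) (b : ZMod 2) (x : Fin n → ZMod 2) :
    _root_.ext (j.insertNth b x) = j.castSucc.insertNth b (_root_.ext x) := by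
  funext i
  refine Fin.lastCases ?_ (fun i' => ?_) i
  · have l2 : Fin.insertNth (α := fun _ => ZMod 2) j.castSucc b (_root_.ext x)
        (Fin.last (n+1)) = 1 := by
      rw [← succAbove_last' j, Fin.insertNth_apply_succAbove]
      simp [_root_.ext]
    rw [l2]
    simp [_root_.ext]
  · by_cases h : i' = j
    · subst h
      simp [_root_.ext, Fin.insertNth_apply_same]
    · obtain ⟨i'', rfl⟩ := Fin.exists_succAbove_eq (Ne.symm h ∘ Eq.symm)
      rw [← Fin.castSucc_succAbove_castSucc, Fin.insertNth_apply_succAbove]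
      simp [_root_.ext]

lemma sum_insertNth {N : ℕ} (p : Fin (N + 1)) (β : Fin (N + 1) → ZMod 2) (b : ZMod 2)
    (v : Fin N → ZMod 2) :
    ∑ i, β i * Fin.insertNth (α := fun _ => ZMod 2) p b v i = β p * b + ∑ i, β (p.succAbove i) * v i := by
  rw [Fin.sum_univ_succAbove _ p]
  simp

lemma zmod2_cases : ∀ z : ZMod 2, z = 0 ∨ z = 1 := by decide

lemma sum_zmod2 (g : ZMod 2 → ℂ) : ∑ b : ZMod 2, g b = g 0 + g 1 := by
  rw [show (Finset.univ : Finset (ZMod 2)) = {0, 1} from by decide,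
    Finset.sum_insert (by decide), Finset.sum_singleton]

theorem affine_closed_sum (n : ℕ) (f : (Fin (n + 1) → ZMod 2) → ℂ)
    (hf : IsAffine (n + 1) f) (j : Fin (n + 1)) :
    IsAffine n (fun x => ∑ b : ZMod 2, f (j.insertNth b x)) := by
  rw [isAffine_iff] at hf ⊢
  obtain ⟨lam, m, t, A, α, hA⟩ := hf
  set j' : Fin (n + 2) := j.castSucc with hj'
  -- expansion of f at insertNth
  have hfb : ∀ (b : ZMod 2) (x : Fin n → ZMod 2),
      f (j.insertNth b x) = lam *
        (if (fun r => A r j' * b + ∑ i, A r (j'.succAbove i) * _root_.ext x i)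
            = (0 : Fin m → ZMod 2) then 1 else 0) *
        Complex.I ^ (∑ k, (α k j' * b + ∑ i, α k (j'.succAbove i) * _root_.ext x i).val) := by
    intro b x
    rw [hA]
    have h1 : A.mulVec (_root_.ext (j.insertNth b x)) =
        fun r => A r j' * b + ∑ i, A r (j'.succAbove i) * _root_.ext x i := by
      funext r
      rw [ext_insertNth]
      simp only [Matrix.mulVec, dotProduct]
      exact sum_insertNth j' (A r) b (_root_.ext x)
    have h2 : ∀ k : Fin t, (∑ i, α k i * _root_.ext (j.insertNth b x) i)
        = α k j' * b + ∑ i, α k (j'.succAbove i) * _root_.ext x i := by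
      intro k
      rw [ext_insertNth]
      exact sum_insertNth j' (α k) b (_root_.ext x)
    rw [h1]
    congr 1
    apply congrArg
    exact Finset.sum_congr rfl fun k _ => by rw [h2 k]
  by_cases hpiv : ∃ r₀, A r₀ j' = 1
  · obtain ⟨r₀, hr₀⟩ := hpiv
    refine ⟨lam, m, t,
      Matrix.of (fun r i => A r j' * A r₀ (j'.succAbove i) + A r (j'.succAbove i)),
      (fun k i => α k j' * A r₀ (j'.succAbove i) + α k (j'.succAbove i)), fun x => ?_⟩
    set v := _root_.ext x with hv
    set b₀ : ZMod 2 := ∑ i, A r₀ (j'.succAbove i) * v i with hb₀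
    have hz : ∀ b : ZMod 2, b ≠ b₀ → f (j.insertNth b x) = 0 := by
      intro b hb
      have hbb : b + b₀ ≠ 0 := by
        rcases zmod2_cases b with rfl | rfl <;> rcases zmod2_cases b₀ with h | h <;>
          rw [h] at hb ⊢ <;> first | exact absurd rfl hb | decide
      rw [hfb]
      have hcondF : ¬ ((fun r => A r j' * b + ∑ i, A r (j'.succAbove i) * v i)
          = (0 : Fin m → ZMod 2)) := by
        intro hcond
        have h2 := congrFun hcond r₀
        simp only [Pi.zero_apply] at h2
        rw [hr₀, one_mul, ← hb₀] at h2
        exact hbb h2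
      rw [if_neg hcondF, mul_zero, zero_mul]
    have hsum : (∑ b : ZMod 2, f (j.insertNth b x)) = f (j.insertNth b₀ x) := by
      rw [sum_zmod2 (fun b => f (j.insertNth b x))]
      rcases zmod2_cases b₀ with h0 | h0
      · rw [hz 1 (by rw [h0]; decide), h0, add_zero]
      · rw [hz 0 (by rw [h0]; decide), h0, zero_add]
    show (∑ b : ZMod 2, f (j.insertNth b x)) = _
    rw [hsum, hfb]
    have hc : (Matrix.of (fun r i => A r j' * A r₀ (j'.succAbove i)
        + A r (j'.succAbove i))).mulVec v
        = fun r => A r j' * b₀ + ∑ i, A r (j'.succAbove i) * v i := by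
      funext r
      simp only [Matrix.mulVec, dotProduct, Matrix.of_apply, add_mul, Finset.sum_add_distrib,
        mul_assoc, ← Finset.mul_sum, hb₀]
    have he : ∀ k : Fin t, (α k j' * b₀ + ∑ i, α k (j'.succAbove i) * v i)
        = ∑ i, (α k j' * A r₀ (j'.succAbove i) + α k (j'.succAbove i)) * v i := by
      intro k
      simp only [add_mul, Finset.sum_add_distrib, mul_assoc, ← Finset.mul_sum, hb₀]
    rw [hc]
    have hE : (∑ k, (α k j' * b₀ + ∑ i, α k (j'.succAbove i) * v i).val)
        = ∑ k, (∑ i, (α k j' * A r₀ (j'.succAbove i) + α k (j'.succAbove i)) * v i).val :=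
      Finset.sum_congr rfl fun k _ => by rw [he k]
    rw [hE]
  · push_neg at hpiv
    have hA0 : ∀ r, A r j' = 0 := fun r => (zmod2_cases (A r j')).resolve_right (hpiv r)
    set B : Matrix (Fin m) (Fin (n + 1)) (ZMod 2) :=
      Matrix.of (fun r i => A r (j'.succAbove i)) with hB
    set β : Fin t → Fin (n + 1) → ZMod 2 := fun k i => α k (j'.succAbove i) with hβ
    set δ : Fin (n + 1) → ZMod 2 := fun i => ∑ k, α k j' * β k i with hδ
    set s : ℕ := ∑ k, (α k j').val with hs
    have hval : ∀ u : ZMod 2, ((u.val : ℕ) : ZMod 2) = u := by decide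
    have hswap : ∀ x, (∑ k, α k j' * (∑ i, β k i * _root_.ext x i))
        = ∑ i, δ i * _root_.ext x i := by
      intro x
      simp only [Finset.mul_sum]
      rw [Finset.sum_comm]
      refine Finset.sum_congr rfl fun i _ => ?_
      rw [hδ]
      rw [Finset.sum_mul]
      exact Finset.sum_congr rfl fun k _ => by ring
    have key : ∀ x, Complex.I ^ (∑ k, (α k j' + ∑ i, β k i * _root_.ext x i).val)
        = Complex.I ^ (∑ k, (∑ i, β k i * _root_.ext x i).val) * Complex.I ^ s
          * (-1 : ℂ) ^ ((∑ i, δ i * _root_.ext x i).val) := by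
      intro x
      have hpt : ∀ k : Fin t, (α k j' + ∑ i, β k i * _root_.ext x i).val
          + 2 * (α k j' * (∑ i, β k i * _root_.ext x i)).val
          = (∑ i, β k i * _root_.ext x i).val + (α k j').val := by
        intro k
        rcases zmod2_cases (α k j') with h | h <;>
          rcases zmod2_cases (∑ i, β k i * _root_.ext x i) with h2 | h2 <;>
          rw [h, h2] <;> decide
      have hEE : (∑ k, (α k j' + ∑ i, β k i * _root_.ext x i).val)
          + 2 * (∑ k, (α k j' * (∑ i, β k i * _root_.ext x i)).val)
          = (∑ k, (∑ i, β k i * _root_.ext x i).val) + s := by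
        rw [hs, Finset.mul_sum, ← Finset.sum_add_distrib, ← Finset.sum_add_distrib]
        exact Finset.sum_congr rfl fun k _ => hpt k
      have hM2 : ((∑ k, (α k j' * (∑ i, β k i * _root_.ext x i)).val) % 2)
          = ((∑ i, δ i * _root_.ext x i).val) % 2 := by
        have h1 : ((∑ k, (α k j' * (∑ i, β k i * _root_.ext x i)).val : ℕ) : ZMod 2)
            = ∑ i, δ i * _root_.ext x i := by
          rw [Nat.cast_sum]
          simp only [hval]
          exact hswap x
        have h2 := congrArg ZMod.val h1
        rw [ZMod.val_natCast] at h2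
        rw [h2, Nat.mod_eq_of_lt (ZMod.val_lt _)]
      have c1 : Complex.I ^ (∑ k, (α k j' + ∑ i, β k i * _root_.ext x i).val)
          * (-1 : ℂ) ^ (∑ k, (α k j' * (∑ i, β k i * _root_.ext x i)).val)
          = Complex.I ^ (∑ k, (∑ i, β k i * _root_.ext x i).val) * Complex.I ^ s := by
        rw [show ((-1 : ℂ) ^ (∑ k, (α k j' * (∑ i, β k i * _root_.ext x i)).val))
            = Complex.I ^ (2 * (∑ k, (α k j' * (∑ i, β k i * _root_.ext x i)).val)) from by
          rw [pow_mul, Complex.I_sq], ← pow_add, hEE, pow_add]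
      have c2 : (-1 : ℂ) ^ (∑ k, (α k j' * (∑ i, β k i * _root_.ext x i)).val)
          * (-1 : ℂ) ^ (∑ k, (α k j' * (∑ i, β k i * _root_.ext x i)).val) = 1 := by
        rw [← pow_add, ← two_mul, pow_mul]
        norm_num
      calc Complex.I ^ (∑ k, (α k j' + ∑ i, β k i * _root_.ext x i).val)
          = Complex.I ^ (∑ k, (α k j' + ∑ i, β k i * _root_.ext x i).val)
            * ((-1 : ℂ) ^ (∑ k, (α k j' * (∑ i, β k i * _root_.ext x i)).val)
              * (-1 : ℂ) ^ (∑ k, (α k j' * (∑ i, β k i * _root_.ext x i)).val)) := by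
            rw [c2, mul_one]
        _ = (Complex.I ^ (∑ k, (∑ i, β k i * _root_.ext x i).val) * Complex.I ^ s)
            * (-1 : ℂ) ^ (∑ k, (α k j' * (∑ i, β k i * _root_.ext x i)).val) := by
            rw [← mul_assoc, c1]
        _ = _ := by rw [neg_one_pow_congr' hM2]
    have hsum : ∀ x, (∑ b : ZMod 2, f (j.insertNth b x)) =
        lam * (if B.mulVec (_root_.ext x) = 0 then 1 else 0) *
          (Complex.I ^ (∑ k, (∑ i, β k i * _root_.ext x i).val)
           + Complex.I ^ (∑ k, (α k j' + ∑ i, β k i * _root_.ext x i).val)) := by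
      intro x
      rw [sum_zmod2 (fun b => f (j.insertNth b x)), hfb, hfb]
      have hcnd : ∀ b : ZMod 2,
          (fun r => A r j' * b + ∑ i, A r (j'.succAbove i) * _root_.ext x i)
          = B.mulVec (_root_.ext x) := by
        intro b
        funext r
        simp [hA0, Matrix.mulVec, dotProduct, hB]
      rw [hcnd 0, hcnd 1]
      have e0 : ∀ k : Fin t, α k j' * 0 + ∑ i, α k (j'.succAbove i) * _root_.ext x i
          = ∑ i, β k i * _root_.ext x i := by intro k; simp [hβ]
      have e1 : ∀ k : Fin t, α k j' * 1 + ∑ i, α k (j'.succAbove i) * _root_.ext x i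
          = α k j' + ∑ i, β k i * _root_.ext x i := by intro k; simp [hβ]
      rw [Finset.sum_congr rfl fun k _ => congrArg ZMod.val (e0 k),
        Finset.sum_congr rfl fun k _ => congrArg ZMod.val (e1 k)]
      ring
    have happ : ∀ (c : ℕ) (x : Fin n → ZMod 2),
        (∑ k : Fin (t + c), (∑ i, Fin.append β (fun _ : Fin c => δ) k i * _root_.ext x i).val)
        = (∑ k, (∑ i, β k i * _root_.ext x i).val)
          + c * (∑ i, δ i * _root_.ext x i).val := by
      intro c x
      rw [Fin.sum_univ_add]
      congr 1
      · exact Finset.sum_congr rfl fun k _ => by simp [Fin.append_left]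
      · simp [Fin.append_right, Finset.sum_const, mul_comm]
    have hmv : ∀ (δ' : Fin (n + 1) → ZMod 2) (x : Fin n → ZMod 2),
        (Matrix.of (Fin.cons δ' (fun r => B r))).mulVec (_root_.ext x)
        = Fin.cons (∑ i, δ' i * _root_.ext x i) (B.mulVec (_root_.ext x)) := by
      intro δ' x
      funext r
      refine Fin.cases ?_ (fun r' => ?_) r <;>
        simp [Matrix.mulVec, dotProduct]
    have hconsne : ∀ (z : ZMod 2) (w : Fin m → ZMod 2), w ≠ 0 →
        ¬ (Fin.cons (α := fun _ => ZMod 2) z w = 0) := by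
      intro z w hw h
      apply hw
      funext r'
      have := congrFun h r'.succ
      rwa [Fin.cons_succ] at this
    have hconsne1 : ∀ (w : Fin m → ZMod 2),
        ¬ (Fin.cons (α := fun _ => ZMod 2) 1 w = 0) := by
      intro w h
      have := congrFun h 0
      rw [Fin.cons_zero] at this
      exact one_ne_zero this
    have hcons0 : ∀ (w : Fin m → ZMod 2), w = 0 →
        (Fin.cons (α := fun _ => ZMod 2) 0 w = 0) := by
      intro w hw
      rw [hw]
      funext r
      refine Fin.cases ?_ (fun r' => ?_) r <;> simp
    rcases (show s % 4 = 0 ∨ s % 4 = 1 ∨ s % 4 = 2 ∨ s % 4 = 3 by omega) with h4 | h4 | h4 | h4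
    · -- s % 4 = 0
      refine ⟨2 * lam, m + 1, t, Matrix.of (Fin.cons δ (fun r => B r)), β, fun x => ?_⟩
      show (∑ b : ZMod 2, f (j.insertNth b x)) = _
      rw [hsum x, key x]
      have hIs : Complex.I ^ s = 1 := by rw [← I_pow_mod4 s, h4, pow_zero]
      rw [hIs, mul_one, hmv δ x]
      by_cases hBv : B.mulVec (_root_.ext x) = 0
      · rcases zmod2_cases (∑ i, δ i * _root_.ext x i) with hz0 | hz0 <;> rw [hz0]
        · rw [if_pos (hcons0 _ hBv), if_pos hBv]
          simp only [ZMod.val_zero, pow_zero]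
          ring
        · rw [if_neg (hconsne1 _), if_pos hBv]
          simp only [ZMod.val_one, pow_one]
          ring
      · rw [if_neg (hconsne _ _ hBv), if_neg hBv]
        ring
    · -- s % 4 = 1
      refine ⟨lam * (1 + Complex.I), m, t + 3, B, Fin.append β (fun _ => δ), fun x => ?_⟩
      show (∑ b : ZMod 2, f (j.insertNth b x)) = _
      rw [hsum x, key x]
      have hIs : Complex.I ^ s = Complex.I := by rw [← I_pow_mod4 s, h4, pow_one]
      rw [hIs, happ 3 x, pow_add]
      rcases zmod2_cases (∑ i, δ i * _root_.ext x i) with hz0 | hz0 <;> rw [hz0]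
      · simp only [ZMod.val_zero, mul_zero, pow_zero]
        ring
      · simp only [ZMod.val_one, pow_one, mul_one]
        linear_combination (lam * (if B.mulVec (_root_.ext x) = 0 then (1:ℂ) else 0)
          * Complex.I ^ (∑ k, (∑ i, β k i * _root_.ext x i).val)
          * (1 - Complex.I - Complex.I ^ 2)) * Complex.I_sq
    · -- s % 4 = 2
      refine ⟨2 * lam, m + 1, t,
        Matrix.of (Fin.cons (fun i => δ i + (if i = Fin.last n then 1 else 0)) (fun r => B r)),
        β, fun x => ?_⟩
      show (∑ b : ZMod 2, f (j.insertNth b x)) = _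
      rw [hsum x, key x]
      have hIs : Complex.I ^ s = -1 := by rw [← I_pow_mod4 s, h4, Complex.I_sq]
      rw [hIs, hmv _ x]
      have hlast : _root_.ext x (Fin.last n) = 1 := by simp [_root_.ext]
      have hδ's : (∑ i, (δ i + (if i = Fin.last n then 1 else 0)) * _root_.ext x i)
          = (∑ i, δ i * _root_.ext x i) + 1 := by
        simp only [add_mul, Finset.sum_add_distrib]
        congr 1
        have h1 : ∀ i : Fin (n + 1), (if i = Fin.last n then (1 : ZMod 2) else 0) * _root_.ext x i
            = if i = Fin.last n then _root_.ext x i else 0 := by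
          intro i; split <;> simp
        rw [Finset.sum_congr rfl fun i _ => h1 i, Finset.sum_ite_eq' Finset.univ (Fin.last n)]
        simp [hlast]
      rw [hδ's]
      by_cases hBv : B.mulVec (_root_.ext x) = 0
      · rcases zmod2_cases (∑ i, δ i * _root_.ext x i) with hz0 | hz0 <;> rw [hz0]
        · rw [show (0 : ZMod 2) + 1 = 1 from by decide, if_neg (hconsne1 _), if_pos hBv]
          simp only [ZMod.val_zero, pow_zero]
          ring
        · rw [show (1 : ZMod 2) + 1 = 0 from by decide, if_pos (hcons0 _ hBv), if_pos hBv]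
          simp only [ZMod.val_one, pow_one]
          ring
      · rw [if_neg (hconsne _ _ hBv), if_neg hBv]
        ring
    · -- s % 4 = 3
      refine ⟨lam * (1 - Complex.I), m, t + 1, B, Fin.append β (fun _ => δ), fun x => ?_⟩
      show (∑ b : ZMod 2, f (j.insertNth b x)) = _
      rw [hsum x, key x]
      have hIs : Complex.I ^ s = Complex.I ^ (3 : ℕ) := by rw [← I_pow_mod4 s, h4]
      rw [hIs, happ 1 x, pow_add]
      rcases zmod2_cases (∑ i, δ i * _root_.ext x i) with hz0 | hz0 <;> rw [hz0]
      · simp only [ZMod.val_zero, mul_zero, pow_zero]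
        linear_combination (lam * (if B.mulVec (_root_.ext x) = 0 then (1:ℂ) else 0)
          * Complex.I ^ (∑ k, (∑ i, β k i * _root_.ext x i).val)
          * Complex.I) * Complex.I_sq
      · simp only [ZMod.val_one, mul_one, pow_one]
        linear_combination (lam * (if B.mulVec (_root_.ext x) = 0 then (1:ℂ) else 0)
          * Complex.I ^ (∑ k, (∑ i, β k i * _root_.ext x i).val)
          * (1 - Complex.I)) * Complex.I_sq
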